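/- Let (V, M, Γ) be an object of C(X) such that M ≠ 0 and such that the only idempotent endomorphisms of (V, M, Γ) in C(X) are 0 and the identity (in particular, this holds if (V,M,Γ) is indecomposable). Then Γ : V → Hom_A(X,M) is injective. Equivalently: if ker Γ ≠ 0 and M ≠ 0, then (V, M, Γ) admits an idempotent endomorphism in C(X) different from 0 and from the identity. -/

import Mathlib

open CategoryTheory CategoryTheory.Limits Opposite ZeroObject

/-- The functor `Hom_A(X, −) : Mod-A ⥤ Mod-k`, sending an `A`-module `M` to the
`k`-vector space `Hom_A(X, M)`. -/
noncomputable def homFromX (k : Type) [Field k] (A : Type) [Ring A] [Algebra k A]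
    (X : ModuleCat A) : ModuleCat A ⥤ ModuleCat k :=
  (linearCoyoneda k (ModuleCat A)).obj (op X)

/-- The comma category `C(X)` whose objects are triples `(V, M, Γ)` with `V` a `k`-vector
space, `M` an `A`-module and `Γ : V → Hom_A(X, M)` `k`-linear. -/
noncomputable abbrev CatCX (k : Type) [Field k] (A : Type) [Ring A] [Algebra k A]
    (X : ModuleCat A) :=
  Comma (𝟭 (ModuleCat k)) (homFromX k A X)

/-- The functor `F₀ : Mod-A ⥤ C(X)`, `M ↦ (0, M, 0)`. -/
noncomputable def F0 (k : Type) [Field k] (A : Type) [Ring A] [Algebra k A]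
    (X : ModuleCat A) : ModuleCat A ⥤ CatCX k A X where
  obj M := { left := 0, right := M, hom := 0 }
  map f := { left := 𝟙 0, right := f, w := by simp }

/-- The functor `F₁ : Mod-A ⥤ C(X)`, `M ↦ (Hom_A(X,M), M, id)`. -/
noncomputable def F1 (k : Type) [Field k] (A : Type) [Ring A] [Algebra k A]
    (X : ModuleCat A) : ModuleCat A ⥤ CatCX k A X where
  obj M := { left := (homFromX k A X).obj M, right := M, hom := 𝟙 _ }
  map f := { left := (homFromX k A X).map f, right := f, w := by simp }

/-- The projection functor `r : C(X) ⥤ Mod-A`, `(V, M, Γ) ↦ M`. -/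
noncomputable def projCX (k : Type) [Field k] (A : Type) [Ring A] [Algebra k A]
    (X : ModuleCat A) : CatCX k A X ⥤ ModuleCat A :=
  Comma.snd (𝟭 (ModuleCat k)) (homFromX k A X)

/-- If `(V, M, Γ)` is an object of `C(X)` with `M ≠ 0` whose only idempotent
endomorphisms are `0` and the identity (e.g. if it is indecomposable), then
`Γ : V → Hom_A(X, M)` is injective. -/
theorem structure_map_injective_of_no_nontrivial_idempotents (k : Type) [Field k] (A : Type)
    [Ring A] [Algebra k A] (X : ModuleCat A) (Y : CatCX k A X)
    (hM : ∃ m : Y.right, m ≠ 0)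
    (hidem : ∀ e : Y ⟶ Y, e ≫ e = e → (e.left = 0 ∧ e.right = 0) ∨ e = 𝟙 Y) :
    Function.Injective Y.hom := by
  rw [← LinearMap.ker_eq_bot (f := Y.hom.hom)]
  by_contra hker
  obtain ⟨W, hW⟩ := Submodule.exists_isCompl (LinearMap.ker Y.hom.hom)
  set p : Y.left →ₗ[k] Y.left :=
    W.subtype ∘ₗ (W.linearProjOfIsCompl (LinearMap.ker Y.hom.hom) hW.symm) with hp
  have hdec : ∀ v : Y.left, v - p v ∈ LinearMap.ker Y.hom.hom := by
    intro v
    have h1 := Submodule.projection_add_projection_eq_self hW v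
    have heq : v - p v
        = (((LinearMap.ker Y.hom.hom).linearProjOfIsCompl W hW v : LinearMap.ker Y.hom.hom) :
            ((𝟭 (ModuleCat k)).obj Y.left)) :=
      (eq_sub_of_add_eq h1).symm
    rw [heq]
    exact Submodule.coe_mem _
  have hfix : ∀ v : Y.left, Y.hom.hom (p v) = Y.hom.hom v := by
    intro v
    have := hdec v
    rw [LinearMap.mem_ker, map_sub, sub_eq_zero] at this
    exact this.symm
  have hpp : ∀ v, p (p v) = p v := by
    intro v
    simp only [hp, LinearMap.comp_apply]
    congr 1
    exact Submodule.linearProjOfIsCompl_apply_left hW.symm _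
  have hw : (𝟭 (ModuleCat k)).map (ModuleCat.ofHom p) ≫ Y.hom = Y.hom ≫ (homFromX k A X).map (𝟙 Y.right) := by
    rw [CategoryTheory.Functor.map_id, Category.comp_id]
    ext v
    exact hfix v
  set e : Y ⟶ Y := { left := ModuleCat.ofHom p, right := 𝟙 Y.right, w := hw } with he
  have hee : e ≫ e = e := by
    apply CommaMorphism.ext
    · ext v
      exact hpp v
    · simp [he]
  rcases hidem e hee with h0 | h1
  · obtain ⟨m, hm⟩ := hM
    have : e.right m = 0 := by rw [h0.2]; rfl
    simp [he] at this
    exact hm this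
  · obtain ⟨v, hv, hv0⟩ := (Submodule.ne_bot_iff _).mp hker
    have hpv : p v = v := by
      have h2 := congrArg CommaMorphism.left h1
      exact congrArg (fun f => f.hom v) h2
    have hz : p v = 0 := by
      simp only [hp, LinearMap.comp_apply]
      exact (congrArg W.subtype
        (Submodule.projectionOnto_apply_of_mem_right hW.symm hv)).trans (map_zero _)
    exact hv0 (hpv ▸ hz)
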